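/- arXiv:1410.8764 — 3 statements merged into one kernel-verified Lean document; each statement's English description precedes it below -/
import Mathlib

section
/- Let L be a lattice, let σ ⊆ L_ℚ be a rational polyhedral cone, let θ: L → P be a homomorphism to a finitely generated abelian group, and let M = ker θ. Then the monoid σ ∩ M is finitely generated; consequently, for any commutative noetherian ring R, the monoid algebra R[σ ∩ M] is a finitely generated R-algebra. -/
open scoped TensorProduct

universe u

/-! ### Properties of commutative (additive) monoids -/

/-- `Q` is cancellative: `a + x = a + y → x = y`. -/
def IsCancellativeAddMonoid (Q : Type*) [AddCommMonoid Q] : Prop :=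
  ∀ a x y : Q, a + x = a + y → x = y

/-- `Q` is torsion-free: `n • x = n • y` for some `n > 0` implies `x = y`. -/
def IsTorsionFreeAddMonoid (Q : Type*) [AddCommMonoid Q] : Prop :=
  ∀ n : ℕ, 0 < n → ∀ x y : Q, n • x = n • y → x = y

/-- `Q` is seminormal: an element `x = a - b` of the Grothendieck group with
`2x, 3x ∈ Q` lies in `Q` (stated elementwise via representatives). -/
def IsSeminormalAddMonoid (Q : Type*) [AddCommMonoid Q] : Prop :=
  ∀ a b : Q, (∃ y : Q, a + a = b + b + y) → (∃ z : Q, a + a + a = b + b + b + z) →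
    ∃ w : Q, a = b + w

/-- `Q` is normal: an element `x = a - b` of the Grothendieck group with
`n • x ∈ Q` for some `n > 0` lies in `Q` (stated elementwise via representatives). -/
def IsNormalAddMonoid (Q : Type*) [AddCommMonoid Q] : Prop :=
  ∀ a b : Q, (∃ n : ℕ, 0 < n ∧ ∃ y : Q, n • a = n • b + y) → ∃ w : Q, a = b + w

/-- `Q` has no nontrivial unit: `x + y = 0 → x = 0`. -/
def HasNoNontrivialAddUnits (Q : Type*) [AddCommMonoid Q] : Prop :=
  ∀ x y : Q, x + y = 0 → x = 0

/-! ### Freeness/extension conditions on rings -/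

/-- Every (not necessarily finitely generated) projective `R`-module is free. -/
def AllProjectiveFree (R : Type u) [CommRing R] : Prop :=
  ∀ (M : Type u) [AddCommGroup M] [Module R M], Module.Projective R M → Module.Free R M

/-- Every finitely generated projective `B`-module is free. -/
def AllFGProjectiveFree (B : Type u) [CommRing B] : Prop :=
  ∀ (M : Type u) [AddCommGroup M] [Module B M],
    Module.Finite B M → Module.Projective B M → Module.Free B M

/-- Every finitely generated projective `B`-module is extended from `R`, i.e. of the form
`B ⊗_R F` for a finitely generated projective `R`-module `F`. -/
def AllFGProjectiveExtended (R B : Type u) [CommRing R] [CommRing B] [Algebra R B] : Prop :=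
  ∀ (M : Type u) [AddCommGroup M] [Module B M],
    Module.Finite B M → Module.Projective B M →
    ∃ (F : Type u) (_ : AddCommGroup F) (_ : Module R F),
      Module.Finite R F ∧ Module.Projective R F ∧ Nonempty (M ≃ₗ[B] B ⊗[R] F)

/-- Condition (†): every projective `R`-module is free and every finitely generated
projective module over the group algebra `R[Q]` of a torsion-free abelian group `Q`
is extended from `R`. -/
def CondDagger (R : Type u) [CommRing R] : Prop :=
  AllProjectiveFree R ∧
  ∀ (Q : Type u) [AddCommGroup Q], IsTorsionFreeAddMonoid Q →
    AllFGProjectiveExtended R (AddMonoidAlgebra R Q)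

/-- Condition (††): every projective `R`-module is free and every finitely generated
projective module over `R[Q × ℤ^n]` is extended from `R`, whenever `Q` is torsion-free,
seminormal, cancellative and has no nontrivial unit. -/
def CondDaggerDagger (R : Type u) [CommRing R] : Prop :=
  AllProjectiveFree R ∧
  ∀ (n : ℕ) (Q : Type u) [AddCommMonoid Q],
    IsCancellativeAddMonoid Q → IsTorsionFreeAddMonoid Q → IsSeminormalAddMonoid Q →
    HasNoNontrivialAddUnits Q →
    AllFGProjectiveExtended R (AddMonoidAlgebra R (Q × (Fin n → ℤ)))

/-! ### Gradings -/

/-- A map `f` is degree-preserving for the gradings `ℳ`, `𝒩`. -/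
def MapsGraded {P M N : Type*} {R : Type*} [Semiring R] [AddCommMonoid M] [AddCommMonoid N]
    [Module R M] [Module R N] (f : M → N)
    (ℳ : P → Submodule R M) (𝒩 : P → Submodule R N) : Prop :=
  ∀ c : P, ∀ m ∈ ℳ c, f m ∈ 𝒩 c

/-- `𝒜` is a `P`-grading of the `R`-algebra `A`:
`A = ⊕_{a ∈ P} A_a`, `A_a · A_b ⊆ A_{a+b}`, `1 ∈ A_0`. -/
structure IsGradedRing {R A P : Type*} [CommRing R] [Ring A] [Algebra R A]
    [AddCommGroup P] [DecidableEq P] (𝒜 : P → Submodule R A) : Prop where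
  is_internal : DirectSum.IsInternal 𝒜
  one_mem : (1 : A) ∈ 𝒜 0
  mul_mem : ∀ {a b : P} {x y : A}, x ∈ 𝒜 a → y ∈ 𝒜 b → x * y ∈ 𝒜 (a + b)

/-- `ℳ` is a `P`-grading of the `A`-module `M`, compatible with the grading `𝒜` of `A`:
`M = ⊕_{a ∈ P} M_a` and `A_a • M_b ⊆ M_{a+b}`. -/
structure IsGradedModule {R A P M : Type*} [CommRing R] [Ring A] [Algebra R A]
    [AddCommGroup P] [DecidableEq P] [AddCommGroup M] [Module R M] [Module A M]
    [IsScalarTower R A M] (𝒜 : P → Submodule R A) (ℳ : P → Submodule R M) : Prop where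
  is_internal : DirectSum.IsInternal ℳ
  smul_mem : ∀ {a b : P} {x : A} {m : M}, x ∈ 𝒜 a → m ∈ ℳ b → x • m ∈ ℳ (a + b)

/-- The natural `P`-grading on `B ⊗[R] F`: `(B ⊗ F)_c = ⊕_{a+b=c} B_a ⊗ F_b`. -/
noncomputable def tensorGrading {R B F P : Type*} [CommRing R] [CommRing B] [Algebra R B]
    [AddCommGroup P] [AddCommGroup F] [Module R F]
    (ℬ : P → Submodule R B) (ℱ : P → Submodule R F) : P → Submodule R (B ⊗[R] F) :=
  fun c => Submodule.span R
    {z | ∃ a b : P, a + b = c ∧ ∃ x ∈ ℬ a, ∃ f ∈ ℱ b, z = x ⊗ₜ[R] f}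

/-- A `P`-graded `A`-module `(M, ℳ)` is (equivariantly) extended from `R`, i.e. trivial:
it is isomorphic, as a `P`-graded `A`-module, to `A ⊗_R F` for some `P`-graded `R`-module
`F` which is finitely generated and projective over `R`. -/
def IsGradedExtendedFrom (R : Type u) {A P : Type u} [CommRing R] [CommRing A]
    [Algebra R A] [AddCommGroup P] [DecidableEq P] (𝒜 : P → Submodule R A)
    (M : Type u) [AddCommGroup M] [Module R M] [Module A M] [IsScalarTower R A M]
    (ℳ : P → Submodule R M) : Prop :=
  ∃ (F : Type u) (_ : AddCommGroup F) (_ : Module R F) (ℱ : P → Submodule R F),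
    DirectSum.IsInternal ℱ ∧ Module.Finite R F ∧ Module.Projective R F ∧
    ∃ e : M ≃ₗ[A] A ⊗[R] F,
      MapsGraded (⇑e) ℳ (tensorGrading 𝒜 ℱ) ∧ MapsGraded (⇑e.symm) (tensorGrading 𝒜 ℱ) ℳ

/-! ### Monoid algebras, cones and faces -/

/-- The grading of a monoid algebra `R[Λ]` induced by a degree function `deg : Λ → P`:
the piece of degree `p` is spanned by the monomials `e_s` with `deg s = p`. -/
noncomputable def monAlgGrading (R : Type*) [CommRing R] {Λ P : Type*} [AddCommMonoid Λ]
    (deg : Λ → P) : P → Submodule R (AddMonoidAlgebra R Λ) :=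
  fun p => Submodule.span R {x | ∃ s : Λ, deg s = p ∧ x = AddMonoidAlgebra.single s 1}

/-- The lattice points `σ ∩ L` of the rational polyhedral cone
`σ = ⋂ᵢ (l i)⁻¹(ℚ≥0)` in `L ⊗ ℚ`. -/
def coneLatticePoints {L : Type*} [AddCommGroup L] {q : ℕ} (l : Fin q → L →+ ℚ) :
    AddSubmonoid L where
  carrier := {m | ∀ i, 0 ≤ l i m}
  zero_mem' := fun i => by simp
  add_mem' := by
    intro a b ha hb i
    rw [map_add]
    exact add_nonneg (ha i) (hb i)

/-- The lattice points `τ ∩ L` of the face `τ = σ ∩ l'⁻¹(0)` of the cone `σ`. -/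
def faceLatticePoints {L : Type*} [AddCommGroup L] {q : ℕ} (l : Fin q → L →+ ℚ)
    (l' : L →+ ℚ) : AddSubmonoid L where
  carrier := {m | (∀ i, 0 ≤ l i m) ∧ l' m = 0}
  zero_mem' := ⟨fun i => by simp, by simp⟩
  add_mem' := by
    intro a b ha hb
    refine ⟨fun i => ?_, ?_⟩
    · rw [map_add]; exact add_nonneg (ha.1 i) (hb.1 i)
    · rw [map_add, ha.2, hb.2, add_zero]

/-- The submonoid of elements of a submonoid `S ⊆ L` killed by `ψ : L →+ P`
(the "invariant" part of `S`). -/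
def kerSubmonoidIn {L P : Type*} [AddCommMonoid L] [AddCommMonoid P]
    (S : AddSubmonoid L) (ψ : L →+ P) : AddSubmonoid L where
  carrier := {m | m ∈ S ∧ ψ m = 0}
  zero_mem' := ⟨S.zero_mem, map_zero ψ⟩
  add_mem' := by
    intro a b ha hb
    exact ⟨S.add_mem ha.1 hb.1, by rw [map_add, ha.2, hb.2, add_zero]⟩

/-- The kernel submonoid `{q ∈ Q | u q = 0}` of a monoid homomorphism `u : Q →+ P`. -/
def kerSubmonoid {Q P : Type*} [AddCommMonoid Q] [AddCommMonoid P] (u : Q →+ P) :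
    AddSubmonoid Q where
  carrier := {q | u q = 0}
  zero_mem' := map_zero u
  add_mem' := by
    intro a b ha hb
    simp only [Set.mem_setOf_eq] at *
    rw [map_add, ha, hb, add_zero]

/-- `S` spans `L ⊗ ℚ`: a positive multiple of every lattice element is a difference of
elements of `S` (this expresses that the cone is "strongly convex", i.e. spans `L_ℚ`). -/
def SpansLattice {L : Type*} [AddCommGroup L] (S : AddSubmonoid L) : Prop :=
  ∀ m : L, ∃ n : ℕ, 0 < n ∧ ∃ x ∈ S, ∃ y ∈ S, (n : ℤ) • m = x - y

/-!
STATEMENT 8 (Lemma `Toric-0` and Corollary `Toric-1`):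
Let `L` be a lattice, `σ ⊆ L_ℚ` a rational polyhedral cone (cut out by the nonzero
functionals `l i`), `θ : L → P` a homomorphism to a finitely generated abelian group
and `M = ker θ`.  Then the monoid `σ ∩ M` is finitely generated; consequently, for any
commutative noetherian ring `R` the monoid algebra `R[σ ∩ M]` is a finitely generated
`R`-algebra.
-/
theorem gordan_fg (L : Type u) [AddCommGroup L] [Module.Free ℤ L] [Module.Finite ℤ L]
    (q : ℕ) (l : Fin q → L →+ ℚ)
    (P : Type u) [AddCommGroup P] (θ : L →+ P) :
    (kerSubmonoidIn (coneLatticePoints l) θ).FG := by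
  classical
  set S := kerSubmonoidIn (coneLatticePoints l) θ with hS
  have hmemS : ∀ m : L, m ∈ S ↔ (∀ i, 0 ≤ l i m) ∧ θ m = 0 := fun m => Iff.rfl
  set ι := Module.Free.ChooseBasisIndex ℤ L with hι
  set b : Module.Basis ι ℤ L := Module.Free.chooseBasis ℤ L with hb
  -- common denominator
  set D : ℕ := ∏ p : Fin q × ι, (l p.1 (b p.2)).den with hD
  have hDpos : 0 < D := Finset.prod_pos fun p _ => (l p.1 (b p.2)).pos
  have hbase : ∀ (i : Fin q) (j : ι), ∃ z : ℤ, (D : ℚ) * l i (b j) = z := by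
    intro i j
    obtain ⟨k, hk⟩ : (l i (b j)).den ∣ D := Finset.dvd_prod_of_mem _ (Finset.mem_univ (i, j))
    refine ⟨k * (l i (b j)).num, ?_⟩
    have hden : ((l i (b j)).den : ℚ) ≠ 0 := by
      exact_mod_cast (l i (b j)).den_nz
    rw [hk]
    push_cast
    calc ((l i (b j)).den : ℚ) * (k : ℚ) * l i (b j)
        = (k : ℚ) * (l i (b j) * (l i (b j)).den) := by ring
      _ = (k : ℚ) * ((l i (b j)).num : ℚ) := by rw [Rat.mul_den_eq_num]
  have hint : ∀ (i : Fin q) (m : L), ∃ z : ℤ, (D : ℚ) * l i m = z := by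
    intro i m
    choose z hz using hbase i
    refine ⟨∑ j : ι, b.repr m j * z j, ?_⟩
    conv_lhs => rw [← b.sum_repr m]
    rw [map_sum, Finset.mul_sum]
    push_cast
    refine Finset.sum_congr rfl fun j _ => ?_
    rw [map_zsmul, zsmul_eq_mul, ← hz j]
    ring
  set v : Fin q → L → ℤ := fun i m => ((D : ℚ) * l i m).num with hv
  have hvc : ∀ (i : Fin q) (m : L), (v i m : ℚ) = (D : ℚ) * l i m := by
    intro i m
    obtain ⟨z, hz⟩ := hint i m
    rw [hv]; simp only [hz, Rat.num_intCast]
  -- the coordinate map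
  set F : L → (ι ⊕ ι ⊕ Fin q) → ℕ := fun m => Sum.elim (fun j => (b.repr m j).toNat)
    (Sum.elim (fun j => (-(b.repr m j)).toNat) (fun i => (v i m).toNat)) with hF
  set μ : L → ℕ := fun m => ∑ j : ι, ((b.repr m j).toNat + (-(b.repr m j)).toNat) with hμ
  have hFinj : ∀ s t : L, F s = F t → s = t := by
    intro s t h
    have : b.repr s = b.repr t := by
      ext j
      have h1 := congrFun h (Sum.inl j)
      have h2 := congrFun h (Sum.inr (Sum.inl j))
      simp only [hF, Sum.elim_inl, Sum.elim_inr] at h1 h2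
      omega
    exact b.repr.injective this
  have hvnn : ∀ (i : Fin q) (m : L), m ∈ S → 0 ≤ v i m := by
    intro i m hm
    have : (0 : ℚ) ≤ (v i m : ℚ) := by
      rw [hvc]
      exact mul_nonneg (by positivity) ((hmemS m).1 hm |>.1 i)
    exact_mod_cast this
  have hle : ∀ a t : L, a ∈ S → t ∈ S → (∀ c, F t c ≤ F a c) →
      ∀ i : Fin q, l i t ≤ l i a := by
    intro a t ha ht h i
    have h3 := h (Sum.inr (Sum.inr i))
    simp only [hF, Sum.elim_inr] at h3
    have h4 : v i t ≤ v i a := by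
      have := hvnn i a ha; have := hvnn i t ht; omega
    have h5 : (v i t : ℚ) ≤ (v i a : ℚ) := by exact_mod_cast h4
    rw [hvc, hvc] at h5
    have hDq : (0 : ℚ) < (D : ℚ) := by exact_mod_cast hDpos
    exact le_of_mul_le_mul_left h5 hDq
  have hsub : ∀ a t : L, a ∈ S → t ∈ S → (∀ c, F t c ≤ F a c) → a - t ∈ S := by
    intro a t ha ht h
    rw [hmemS]
    constructor
    · intro i
      rw [map_sub, sub_nonneg]
      exact hle a t ha ht h i
    · rw [map_sub, ((hmemS a).1 ha).2, ((hmemS t).1 ht).2, sub_zero]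
  have hmuadd : ∀ a t : L, (∀ c, F t c ≤ F a c) → μ (a - t) + μ t = μ a := by
    intro a t h
    rw [hμ]
    simp only
    rw [← Finset.sum_add_distrib]
    refine Finset.sum_congr rfl fun j _ => ?_
    have h1 := h (Sum.inl j)
    have h2 := h (Sum.inr (Sum.inl j))
    simp only [hF, Sum.elim_inl, Sum.elim_inr] at h1 h2
    rw [map_sub]
    simp only [Finsupp.coe_sub, Pi.sub_apply]
    omega
  have hmumono : ∀ a t : L, (∀ c, F t c ≤ F a c) → μ t ≤ μ a := by
    intro a t h
    refine Finset.sum_le_sum fun j _ => ?_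
    have h1 := h (Sum.inl j)
    have h2 := h (Sum.inr (Sum.inl j))
    simp only [hF, Sum.elim_inl, Sum.elim_inr] at h1 h2
    omega
  have hmueq : ∀ a t : L, (∀ c, F t c ≤ F a c) → μ t = μ a → t = a := by
    intro a t h heq
    have hco : ∀ j ∈ (Finset.univ : Finset ι),
        ((b.repr t j).toNat + (-(b.repr t j)).toNat)
          = ((b.repr a j).toNat + (-(b.repr a j)).toNat) := by
      refine (Finset.sum_eq_sum_iff_of_le fun j _ => ?_).1 heq
      have h1 := h (Sum.inl j)
      have h2 := h (Sum.inr (Sum.inl j))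
      simp only [hF, Sum.elim_inl, Sum.elim_inr] at h1 h2
      omega
    apply b.repr.injective
    ext j
    have h1 := h (Sum.inl j)
    have h2 := h (Sum.inr (Sum.inl j))
    simp only [hF, Sum.elim_inl, Sum.elim_inr] at h1 h2
    have h3 := hco j (Finset.mem_univ j)
    omega
  have hmu0 : ∀ t : L, μ t = 0 → t = 0 := by
    intro t h
    have : ∀ j : ι, b.repr t j = 0 := by
      intro j
      have := Finset.sum_eq_zero_iff.1 h j (Finset.mem_univ j)
      omega
    apply b.repr.injective
    ext j
    simp [this j]
  -- the generating set
  set G : Set L := {s | s ∈ S ∧ s ≠ 0 ∧ ∀ t, t ∈ S → t ≠ 0 → (∀ c, F t c ≤ F s c) → t = s}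
    with hG
  have hgen : ∀ a : L, a ∈ S → a ∈ AddSubmonoid.closure G := by
    have key : ∀ n : ℕ, ∀ a : L, a ∈ S → μ a = n → a ∈ AddSubmonoid.closure G := by
      intro n
      induction n using Nat.strong_induction_on with
      | _ n IH =>
        intro a haS hμa
        by_cases ha0 : a = 0
        · subst ha0; exact AddSubmonoid.zero_mem _
        by_cases haG : a ∈ G
        · exact AddSubmonoid.subset_closure haG
        have hex : ∃ t, t ∈ S ∧ t ≠ 0 ∧ (∀ c, F t c ≤ F a c) ∧ t ≠ a := by
          by_contra hcon
          push_neg at hcon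
          exact haG ⟨haS, ha0, fun t h1 h2 h3 => hcon t h1 h2 h3⟩
        obtain ⟨t, htS, ht0, htF, htne⟩ := hex
        have hmt : μ t < μ a := by
          rcases lt_or_eq_of_le (hmumono a t htF) with h | h
          · exact h
          · exact absurd (hmueq a t htF h) htne
        have hmt0 : μ t ≠ 0 := fun h => ht0 (hmu0 t h)
        have hma : μ (a - t) < μ a := by
          have := hmuadd a t htF; omega
        have h1 : t ∈ AddSubmonoid.closure G := IH (μ t) (hμa ▸ hmt) t htS rfl
        have h2 : a - t ∈ AddSubmonoid.closure G :=
          IH (μ (a - t)) (hμa ▸ hma) (a - t) (hsub a t haS htS htF) rfl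
        have : t + (a - t) = a := by abel
        exact this ▸ AddSubmonoid.add_mem _ h1 h2
    exact fun a ha => key (μ a) a ha rfl
  have hGfin : G.Finite := by
    have hanti : IsAntichain (· ≤ ·) (F '' G) := by
      rintro x ⟨s, hs, rfl⟩ y ⟨t, ht, rfl⟩ hne hxy
      have hFle : ∀ c, F s c ≤ F t c := fun c => hxy c
      exact hne (congrArg F (ht.2.2 s hs.1 hs.2.1 hFle))
    haveI : ∀ i : ι ⊕ ι ⊕ Fin q, IsWellOrder ((fun _ => ℕ) i) (· < ·) :=
      fun _ => inferInstanceAs (IsWellOrder ℕ (· < ·))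
    have hfin : (F '' G).Finite :=
      hanti.finite_of_partiallyWellOrderedOn
        ((Set.IsPWO.pi (ι := ι ⊕ ι ⊕ Fin q) (α := fun _ => ℕ)
          (fun _ => Set.IsPWO.of_linearOrder Set.univ)).mono (fun x _ => by simp))
    exact Set.Finite.of_finite_image hfin fun s hs t ht h => hFinj s t h
  have hcl : AddSubmonoid.closure G = S := by
    apply le_antisymm
    · rw [AddSubmonoid.closure_le]
      exact fun g hg => hg.1
    · exact fun a ha => hgen a ha
  exact (AddSubmonoid.fg_iff S).mpr ⟨G, hcl, hGfin⟩

theorem cone_meets_kernel_finitely_generated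
    (L : Type u) [AddCommGroup L] [Module.Free ℤ L] [Module.Finite ℤ L]
    (q : ℕ) (l : Fin q → L →+ ℚ) (hlne : ∀ i, l i ≠ 0)
    (P : Type u) [AddCommGroup P] [AddGroup.FG P] (θ : L →+ P)
    (R : Type u) [CommRing R] [IsNoetherianRing R] :
    AddMonoid.FG ↥(kerSubmonoidIn (coneLatticePoints l) θ) ∧
    Algebra.FiniteType R (AddMonoidAlgebra R ↥(kerSubmonoidIn (coneLatticePoints l) θ)) := by
  have hfg : (kerSubmonoidIn (coneLatticePoints l) θ).FG := gordan_fg L q l P θ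
  have h1 : AddMonoid.FG ↥(kerSubmonoidIn (coneLatticePoints l) θ) :=
    (AddMonoid.fg_iff_addSubmonoid_fg _).mpr hfg
  exact ⟨h1, by haveI := h1; infer_instance⟩
end

section
/- Let L be a lattice and σ ⊆ L_ℚ a strongly convex rational polyhedral cone cut out by linear functionals l_1,…,l_q. Let R be a commutative ring, A = R[σ∩L] ⊆ R[L], and let J ⊆ A be the ideal generated by the monomials e_m with m strictly inside σ (i.e., l_i(m) > 0 for all i). Then for any m ∈ L there is a sufficiently large integer N such that f/e_m ∈ A for every f ∈ J^N; that is, e_{−m}·f ∈ R[σ∩L] inside R[L]. Equivalently, for every m ∈ L there is N such that for any m_1,…,m_N ∈ σ∩L strictly inside σ, one has m_1 + ⋯ + m_N − m ∈ σ∩L. -/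
open scoped TensorProduct

universe u

/-!
STATEMENT 9 (Lemma `large N`):
Let `L` be a lattice and `σ ⊆ L_ℚ` a strongly convex rational polyhedral cone cut out
by the functionals `l 1, …, l q`.  For every `m ∈ L` there is a sufficiently large
`N` such that for any `m_1, …, m_N ∈ σ ∩ L` strictly inside `σ` (i.e. `l i (m_k) > 0`
for all `i`) one has `m_1 + ⋯ + m_N - m ∈ σ ∩ L`; equivalently, `f / e_m ∈ R[σ ∩ L]`
for every `f ∈ J^N`, where `J` is the ideal generated by the strictly interior
monomials.
-/
theorem interior_monomials_swallow_denominators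
    (L : Type u) [AddCommGroup L] [Module.Free ℤ L] [Module.Finite ℤ L]
    (q : ℕ) (l : Fin q → L →+ ℚ) (hlne : ∀ i, l i ≠ 0)
    (hspan : SpansLattice (coneLatticePoints l))
    (m : L) :
    ∃ N : ℕ, ∀ ms : Fin N → L,
      (∀ k, ms k ∈ coneLatticePoints l ∧ ∀ i, 0 < l i (ms k)) →
      (∑ k, ms k) - m ∈ coneLatticePoints l := by
  classical
  let b := Module.Free.chooseBasis ℤ L
  set d : ℕ := ∏ i : Fin q, ∏ j, (l i (b j)).den with hd
  have hdpos : 0 < d := Finset.prod_pos fun i _ => Finset.prod_pos fun j _ => (l i (b j)).pos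
  have hdQ : (0:ℚ) < (d:ℚ) := by exact_mod_cast hdpos
  have hz : ∀ i j, ∃ z : ℤ, ((d:ℚ)) * l i (b j) = z := by
    intro i j
    have h1 : (l i (b j)).den ∣ ∏ j', (l i (b j')).den :=
      Finset.dvd_prod_of_mem _ (Finset.mem_univ j)
    have h2 : (∏ j', (l i (b j')).den) ∣ d :=
      Finset.dvd_prod_of_mem (fun i => ∏ j', (l i (b j')).den) (Finset.mem_univ i)
    have hdvd : (l i (b j)).den ∣ d := h1.trans h2
    obtain ⟨c, hc⟩ := hdvd
    refine ⟨(l i (b j)).num * c, ?_⟩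
    calc (d:ℚ) * l i (b j) = (l i (b j) * (l i (b j)).den) * c := by
          rw [hc]; push_cast; ring
      _ = ((l i (b j)).num : ℚ) * c := by rw [Rat.mul_den_eq_num]
      _ = _ := by push_cast; ring
  have key : ∀ i (x : L), ∃ z : ℤ, (d:ℚ) * l i x = z := by
    intro i x
    choose z hzz using hz i
    refine ⟨∑ j, b.repr x j * z j, ?_⟩
    calc (d:ℚ) * l i x = (d:ℚ) * l i (∑ j, b.repr x j • b j) := by rw [b.sum_repr x]
      _ = ∑ j, (b.repr x j : ℚ) * ((d:ℚ) * l i (b j)) := by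
          rw [map_sum, Finset.mul_sum]
          refine Finset.sum_congr rfl fun j _ => ?_
          rw [map_zsmul, zsmul_eq_mul]
          push_cast
          ring
      _ = ∑ j, (b.repr x j : ℚ) * (z j : ℚ) := by
          refine Finset.sum_congr rfl fun j _ => by rw [hzz]
      _ = _ := by push_cast; ring
  obtain ⟨M, hM⟩ : ∃ M : ℕ, ∀ i, l i m ≤ M := by
    refine ⟨Finset.univ.sup fun i => (⌈l i m⌉).toNat, fun i => ?_⟩
    calc l i m ≤ (⌈l i m⌉ : ℚ) := Int.le_ceil _
      _ ≤ ((⌈l i m⌉.toNat : ℤ) : ℚ) := by exact_mod_cast Int.self_le_toNat _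
      _ ≤ _ := by
          exact_mod_cast Nat.cast_le.mpr
            (Finset.le_sup (f := fun i => (⌈l i m⌉).toNat) (Finset.mem_univ i))
  refine ⟨d * M, fun ms hms => ?_⟩
  intro i
  have hterm : ∀ k, (1:ℚ)/d ≤ l i (ms k) := by
    intro k
    obtain ⟨z, hzk⟩ := key i (ms k)
    have hpos : 0 < (z:ℚ) := by
      rw [← hzk]
      exact mul_pos hdQ ((hms k).2 i)
    have h1z : (1:ℚ) ≤ (z:ℚ) := by exact_mod_cast (by exact_mod_cast hpos : (0:ℤ) < z)
    have : l i (ms k) = (z:ℚ) / d := by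
      field_simp
      linarith [hzk]
    rw [this]
    gcongr
  show 0 ≤ l i ((∑ k, ms k) - m)
  rw [map_sub, map_sum]
  have hsum : (M:ℚ) ≤ ∑ k, l i (ms k) := by
    have hle : (Finset.univ : Finset (Fin (d*M))).card • ((1:ℚ)/d) ≤ ∑ k, l i (ms k) :=
      Finset.card_nsmul_le_sum _ _ _ fun k _ => hterm k
    have hcard : (Finset.univ : Finset (Fin (d*M))).card = d*M := by simp
    rw [hcard] at hle
    have : ((d*M : ℕ) : ℚ) * ((1:ℚ)/d) = M := by
      push_cast
      field_simp
    rwa [nsmul_eq_mul, this] at hle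
  linarith [hM i]
end

section
/- Let R be a commutative noetherian ring, P a finitely generated abelian group, and let 0 → M_1 → M_2 → M_3 → 0 be a short exact sequence of P-graded R-modules with degree-preserving R-linear maps. Then: (a) for each a ∈ P the induced sequence of degree-a components 0 → (M_1)_a → (M_2)_a → (M_3)_a → 0 is exact; and (b) the sequence admits a degree-preserving R-linear splitting if and only if it admits an R-linear splitting (i.e., it splits as a sequence of P-graded R-modules if and only if it splits as a sequence of R-modules). -/
open scoped TensorProduct

universe u

/-!
STATEMENT 10 (Corollary `SES-mod`):
Let `R` be a commutative noetherian ring, `P` a finitely generated abelian group,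
and `0 → M₁ → M₂ → M₃ → 0` a short exact sequence of `P`-graded `R`-modules with
degree-preserving maps.  Then (a) for each `a ∈ P` the sequence of degree-`a`
components is exact, and (b) the sequence splits by a degree-preserving `R`-linear
section if and only if it splits by an `R`-linear section.
-/

lemma mapsGraded_decompose_comm {R M N P : Type*} [CommRing R] [AddCommGroup M]
    [AddCommGroup N] [Module R M] [Module R N] [AddCommGroup P] [DecidableEq P]
    (ℳ : P → Submodule R M) (𝒩 : P → Submodule R N)
    [DirectSum.Decomposition ℳ] [DirectSum.Decomposition 𝒩]
    (φ : M →ₗ[R] N)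
    (hφ : ∀ c : P, ∀ m ∈ ℳ c, φ m ∈ 𝒩 c) (a : P) (m : M) :
    (DirectSum.decompose 𝒩 (φ m) a : N) = φ (DirectSum.decompose ℳ m a) := by
  induction m using DirectSum.Decomposition.inductionOn ℳ with
  | zero => simp
  | @homogeneous i x =>
    by_cases h : a = i
    · subst h
      rw [DirectSum.decompose_of_mem_same 𝒩 (hφ a x x.2),
        DirectSum.decompose_coe, DirectSum.of_eq_same]
    · rw [DirectSum.decompose_of_mem_ne 𝒩 (hφ i x x.2) (Ne.symm h),
        DirectSum.decompose_coe, DirectSum.of_eq_of_ne _ _ _ h]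
      simp
  | add x y hx hy =>
    rw [map_add, DirectSum.decompose_add, DirectSum.decompose_add, DirectSum.add_apply,
      DirectSum.add_apply, Submodule.coe_add, Submodule.coe_add, hx, hy, map_add]

set_option synthInstance.maxHeartbeats 400000 in
theorem graded_ses_componentwise_exact_and_split_iff_split
    (R : Type u) [CommRing R] [IsNoetherianRing R]
    (P : Type u) [AddCommGroup P] [AddGroup.FG P] [DecidableEq P]
    (M₁ M₂ M₃ : Type u) [AddCommGroup M₁] [AddCommGroup M₂] [AddCommGroup M₃]
    [Module R M₁] [Module R M₂] [Module R M₃]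
    (ℳ₁ : P → Submodule R M₁) (ℳ₂ : P → Submodule R M₂) (ℳ₃ : P → Submodule R M₃)
    (h1 : DirectSum.IsInternal ℳ₁) (h2 : DirectSum.IsInternal ℳ₂)
    (h3 : DirectSum.IsInternal ℳ₃)
    (f : M₁ →ₗ[R] M₂) (g : M₂ →ₗ[R] M₃)
    (hf : MapsGraded (⇑f) ℳ₁ ℳ₂) (hg : MapsGraded (⇑g) ℳ₂ ℳ₃)
    (hinj : Function.Injective f) (hsurj : Function.Surjective g)
    (hexact : LinearMap.range f = LinearMap.ker g) :
    (∀ a : P,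
      (∀ m ∈ ℳ₁ a, f m = 0 → m = 0) ∧
      (∀ y ∈ ℳ₃ a, ∃ x ∈ ℳ₂ a, g x = y) ∧
      (∀ x ∈ ℳ₂ a, g x = 0 → ∃ m ∈ ℳ₁ a, f m = x)) ∧
    ((∃ s : M₃ →ₗ[R] M₂, g.comp s = LinearMap.id ∧ MapsGraded (⇑s) ℳ₃ ℳ₂) ↔
      (∃ s : M₃ →ₗ[R] M₂, g.comp s = LinearMap.id)) := by
  letI d1 := h1.chooseDecomposition
  letI d2 := h2.chooseDecomposition
  letI d3 := h3.chooseDecomposition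
  constructor
  · intro a
    refine ⟨fun m _ hm0 => hinj (by rw [hm0, map_zero]), ?_, ?_⟩
    · intro y hy
      obtain ⟨x, hx⟩ := hsurj y
      refine ⟨(DirectSum.decompose ℳ₂ x a : M₂), (DirectSum.decompose ℳ₂ x a).2, ?_⟩
      rw [← mapsGraded_decompose_comm ℳ₂ ℳ₃ g hg a x, hx,
        DirectSum.decompose_of_mem_same ℳ₃ hy]
    · intro x hx hgx
      have : x ∈ LinearMap.range f := by rw [hexact]; exact hgx
      obtain ⟨m, hm⟩ := this
      refine ⟨(DirectSum.decompose ℳ₁ m a : M₁), (DirectSum.decompose ℳ₁ m a).2, ?_⟩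
      rw [← mapsGraded_decompose_comm ℳ₁ ℳ₂ f hf a m, hm,
        DirectSum.decompose_of_mem_same ℳ₂ hx]
  · constructor
    · rintro ⟨s, hs, -⟩; exact ⟨s, hs⟩
    · rintro ⟨s, hs⟩
      have hsid : ∀ y : M₃, g (s y) = y := fun y => LinearMap.congr_fun hs y
      set φ : ∀ a : P, ℳ₃ a →ₗ[R] ℳ₂ a := fun a =>
        { toFun := fun y => DirectSum.decompose ℳ₂ (s y) a
          map_add' := by
            intro x y
            dsimp only
            rw [Submodule.coe_add, map_add, DirectSum.decompose_add, DirectSum.add_apply]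
          map_smul' := by
            intro r x
            dsimp only
            rw [Submodule.coe_smul, map_smul, DirectSum.decompose_smul, DirectSum.smul_apply,
              RingHom.id_apply] } with hφ
      set s' : M₃ →ₗ[R] M₂ :=
        (DirectSum.coeLinearMap ℳ₂) ∘ₗ (DFinsupp.mapRange.linearMap φ) ∘ₗ
          (DirectSum.decomposeLinearEquiv ℳ₃ : M₃ →ₗ[R] DirectSum P fun a => ℳ₃ a) with hs'
      have key : ∀ (b : P) (x : ℳ₃ b), s' (x : M₃) = (φ b x : M₂) := by
        intro b x
        have h1 : DFinsupp.mapRange.linearMap φ (DirectSum.of (fun a => ℳ₃ a) b x)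
            = DirectSum.of (fun a => ℳ₂ a) b (φ b x) := by
          rw [DFinsupp.mapRange.linearMap_apply]
          exact DFinsupp.mapRange_single
        have h0 : (DirectSum.decomposeLinearEquiv ℳ₃ : M₃ →ₗ[R] DirectSum P fun a => ℳ₃ a)
            (x : M₃) = DirectSum.of (fun a => ℳ₃ a) b x := by
          rw [LinearEquiv.coe_coe, DirectSum.decomposeLinearEquiv_apply,
            DirectSum.decompose_coe]
        rw [hs']
        exact (congrArg (fun z => DirectSum.coeLinearMap ℳ₂ (DFinsupp.mapRange.linearMap φ z))
          h0).trans (by rw [h1]; exact DirectSum.coeLinearMap_of _ b (φ b x))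
      refine ⟨s', ?_, ?_⟩
      · ext m
        simp only [LinearMap.comp_apply, LinearMap.id_apply]
        induction m using DirectSum.Decomposition.inductionOn ℳ₃ with
        | zero => simp
        | @homogeneous b x =>
          rw [key b x]
          have := mapsGraded_decompose_comm ℳ₂ ℳ₃ g hg b (s (x : M₃))
          rw [hφ]
          simp only [LinearMap.coe_mk, AddHom.coe_mk]
          rw [← this, hsid, DirectSum.decompose_coe, DirectSum.of_eq_same]
        | add x y hx hy => rw [map_add, map_add, hx, hy]
      · intro c m hm
        have := key c ⟨m, hm⟩
        simp only [Submodule.coe_mk] at this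
        rw [this]
        exact (φ c ⟨m, hm⟩).2
end
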